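/- Let r > 0 and 0 < u₁ ≤ u₂ < 1 be real numbers. Then g(r, u₁) ≤ g(r, u₂), where g(r,u) := 2·log_{(1+r)u/(1+ru)} u and log_b x denotes the base-b logarithm (ln x)/(ln b). -/

import Mathlib

open Real

private lemma hasDerivAt_log_lin (r : ℝ) (x : ℝ) (h : 0 < 1 + r * x) :
    HasDerivAt (fun y => Real.log (1 + r * y)) (r / (1 + r * x)) x := by
  have hlin : HasDerivAt (fun y : ℝ => 1 + r * y) r x := by
    simpa using ((hasDerivAt_id x).const_mul r).const_add 1
  have := (Real.hasDerivAt_log h.ne').comp x hlin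
  simpa [div_eq_mul_inv, mul_comm, Function.comp_def] using this

private lemma hasDerivAt_phi (r : ℝ) {x : ℝ} (hx : 0 < x) (h : 0 < 1 + r * x) :
    HasDerivAt (fun y => (1 + r * y) * (Real.log (1 + r) - Real.log (1 + r * y))
        + r * y * Real.log y)
      (r * (Real.log (1 + r) + Real.log x - Real.log (1 + r * x))) x := by
  have hlin : HasDerivAt (fun y : ℝ => 1 + r * y) r x := by
    simpa using ((hasDerivAt_id x).const_mul r).const_add 1
  have h1 : HasDerivAt (fun y => Real.log (1 + r) - Real.log (1 + r * y))
      (-(r / (1 + r * x))) x := by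
    simpa using (hasDerivAt_log_lin r x h).const_sub (Real.log (1 + r))
  have h2 := hlin.mul h1
  have h3 : HasDerivAt (fun y : ℝ => r * y * Real.log y)
      (r * Real.log x + r) x := by
    have := (((hasDerivAt_id x).const_mul r).mul (Real.hasDerivAt_log hx.ne'))
    refine this.congr_deriv ?_
    simp [hx.ne']
  have := h2.add h3
  refine this.congr_deriv ?_
  field_simp
  ring

private lemma phi_nonneg (r : ℝ) (hr : 0 < r) {u : ℝ} (hu0 : 0 < u) (hu1 : u ≤ 1) :
    0 ≤ (1 + r * u) * (Real.log (1 + r) - Real.log (1 + r * u)) + r * u * Real.log u := by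
  set φ : ℝ → ℝ := fun y => (1 + r * y) * (Real.log (1 + r) - Real.log (1 + r * y))
      + r * y * Real.log y with hφ
  have key : AntitoneOn φ (Set.Icc u 1) := by
    apply antitoneOn_of_deriv_nonpos (convex_Icc u 1)
    · apply ContinuousOn.add
      · apply ContinuousOn.mul (by fun_prop)
        apply ContinuousOn.sub continuousOn_const
        apply ContinuousOn.log (by fun_prop)
        intro x hx
        have : 0 < x := lt_of_lt_of_le hu0 hx.1
        positivity
      · apply ContinuousOn.mul (by fun_prop)
        apply ContinuousOn.log continuousOn_id
        intro x hx
        exact (lt_of_lt_of_le hu0 hx.1).ne'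
    · intro x hx
      rw [interior_Icc] at hx
      have hx0 : 0 < x := lt_trans hu0 hx.1
      have hx1 : 0 < 1 + r * x := by positivity
      exact (hasDerivAt_phi r hx0 hx1).differentiableAt.differentiableWithinAt
    · intro x hx
      rw [interior_Icc] at hx
      have hx0 : 0 < x := lt_trans hu0 hx.1
      have hx1 : 0 < 1 + r * x := by positivity
      rw [(hasDerivAt_phi r hx0 hx1).deriv]
      have hlt : (1 + r) * x < 1 + r * x := by nlinarith [hx.2]
      have : Real.log (1 + r) + Real.log x = Real.log ((1 + r) * x) := by
        rw [Real.log_mul (by positivity) hx0.ne']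
      rw [this, sub_nonpos.symm]
      have := Real.log_le_log (by positivity) hlt.le
      nlinarith
  have h1 : φ 1 = 0 := by simp [hφ]
  have := key (Set.mem_Icc.mpr ⟨le_refl u, hu1⟩) (Set.mem_Icc.mpr ⟨hu1, le_refl 1⟩) hu1
  rw [h1] at this
  exact this

private lemma h_mono (r : ℝ) (hr : 0 < r) {u₁ u₂ : ℝ} (hu1 : 0 < u₁) (hu : u₁ ≤ u₂)
    (hu2 : u₂ < 1) :
    (Real.log (1 + r) - Real.log (1 + r * u₁)) / (-Real.log u₁)
      ≤ (Real.log (1 + r) - Real.log (1 + r * u₂)) / (-Real.log u₂) := by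
  set h : ℝ → ℝ := fun y => (Real.log (1 + r) - Real.log (1 + r * y)) / (-Real.log y) with hh
  have key : MonotoneOn h (Set.Icc u₁ u₂) := by
    apply monotoneOn_of_deriv_nonneg (convex_Icc u₁ u₂)
    · apply ContinuousOn.div
      · apply ContinuousOn.sub continuousOn_const
        apply ContinuousOn.log (by fun_prop)
        intro x hx
        have : 0 < x := lt_of_lt_of_le hu1 hx.1
        positivity
      · apply ContinuousOn.neg
        apply ContinuousOn.log continuousOn_id
        intro x hx
        exact (lt_of_lt_of_le hu1 hx.1).ne'
      · intro x hx
        have hx0 : 0 < x := lt_of_lt_of_le hu1 hx.1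
        have hx1 : x < 1 := lt_of_le_of_lt hx.2 hu2
        have := Real.log_neg hx0 hx1
        linarith
    · intro x hx
      rw [interior_Icc] at hx
      have hx0 : 0 < x := lt_trans hu1 hx.1
      have hx1 : x < 1 := lt_trans hx.2 hu2
      have hxr : 0 < 1 + r * x := by positivity
      have hN : HasDerivAt (fun y => Real.log (1 + r) - Real.log (1 + r * y))
          (-(r / (1 + r * x))) x := by
        simpa using (hasDerivAt_log_lin r x hxr).const_sub (Real.log (1 + r))
      have hD : HasDerivAt (fun y : ℝ => -Real.log y) (-(1/x)) x := by
        exact (Real.hasDerivAt_log hx0.ne').neg.congr_deriv (by simp)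
      have hDne : -Real.log x ≠ 0 := by
        have := Real.log_neg hx0 hx1; linarith
      exact (hN.div hD hDne).differentiableAt.differentiableWithinAt
    · intro x hx
      rw [interior_Icc] at hx
      have hx0 : 0 < x := lt_trans hu1 hx.1
      have hx1 : x < 1 := lt_trans hx.2 hu2
      have hxr : 0 < 1 + r * x := by positivity
      have hN : HasDerivAt (fun y => Real.log (1 + r) - Real.log (1 + r * y))
          (-(r / (1 + r * x))) x := by
        simpa using (hasDerivAt_log_lin r x hxr).const_sub (Real.log (1 + r))
      have hD : HasDerivAt (fun y : ℝ => -Real.log y) (-(1/x)) x := by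
        exact (Real.hasDerivAt_log hx0.ne').neg.congr_deriv (by simp)
      have hlogneg : Real.log x < 0 := Real.log_neg hx0 hx1
      have hDne : -Real.log x ≠ 0 := by linarith
      rw [show deriv h x = _ from ((hN.div hD hDne)).deriv]
      apply div_nonneg
      · have hphi := phi_nonneg r hr hx0 hx1.le
        have heq : -(r / (1 + r * x)) * -Real.log x
            - (Real.log (1 + r) - Real.log (1 + r * x)) * -(1 / x)
            = ((1 + r * x) * (Real.log (1 + r) - Real.log (1 + r * x))
                + r * x * Real.log x) / (x * (1 + r * x)) := by
          field_simp
          ring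
        rw [heq]
        exact div_nonneg hphi (by positivity)
      · positivity
  have m1 : u₁ ∈ Set.Icc u₁ u₂ := Set.mem_Icc.mpr ⟨le_refl _, hu⟩
  have m2 : u₂ ∈ Set.Icc u₁ u₂ := Set.mem_Icc.mpr ⟨hu, le_refl _⟩
  exact key m1 m2 hu

theorem stmt_7 (r u₁ u₂ : ℝ) (hr : 0 < r) (hu1 : 0 < u₁) (hu : u₁ ≤ u₂) (hu2 : u₂ < 1) :
    2 * Real.logb ((1 + r) * u₁ / (1 + r * u₁)) u₁
      ≤ 2 * Real.logb ((1 + r) * u₂ / (1 + r * u₂)) u₂ := by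
  have hu1' : u₁ < 1 := lt_of_le_of_lt hu hu2
  have hu2' : 0 < u₂ := lt_of_lt_of_le hu1 hu
  set L₁ := Real.log u₁
  set L₂ := Real.log u₂
  set N₁ := Real.log (1 + r) - Real.log (1 + r * u₁)
  set N₂ := Real.log (1 + r) - Real.log (1 + r * u₂)
  have hr1 : (0:ℝ) < 1 + r * u₁ := by positivity
  have hr2 : (0:ℝ) < 1 + r * u₂ := by positivity
  have hL₁ : L₁ < 0 := Real.log_neg hu1 hu1'
  have hL₂ : L₂ < 0 := Real.log_neg hu2' hu2
  have hN₁ : 0 < N₁ := by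
    have : 1 + r * u₁ < 1 + r := by nlinarith
    have := Real.log_lt_log hr1 this
    simp only [N₁]; linarith
  have hN₂ : 0 < N₂ := by
    have : 1 + r * u₂ < 1 + r := by nlinarith
    have := Real.log_lt_log hr2 this
    simp only [N₂]; linarith
  have hb1 : Real.log ((1 + r) * u₁ / (1 + r * u₁)) = L₁ + N₁ := by
    rw [Real.log_div (by positivity) hr1.ne', Real.log_mul (by positivity) hu1.ne']
    simp only [L₁, N₁]; ring
  have hb2 : Real.log ((1 + r) * u₂ / (1 + r * u₂)) = L₂ + N₂ := by
    rw [Real.log_div (by positivity) hr2.ne', Real.log_mul (by positivity) hu2'.ne']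
    simp only [L₂, N₂]; ring
  have hden1 : L₁ + N₁ < 0 := by
    have : (1 + r) * u₁ / (1 + r * u₁) < 1 := by
      rw [div_lt_one hr1]; nlinarith
    have := Real.log_neg (by positivity) this
    rwa [hb1] at this
  have hden2 : L₂ + N₂ < 0 := by
    have : (1 + r) * u₂ / (1 + r * u₂) < 1 := by
      rw [div_lt_one hr2]; nlinarith
    have := Real.log_neg (by positivity) this
    rwa [hb2] at this
  have hcross : N₁ / (-L₁) ≤ N₂ / (-L₂) := h_mono r hr hu1 hu hu2
  have hkey : L₁ * N₂ ≤ L₂ * N₁ := by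
    rw [div_le_div_iff₀ (by linarith) (by linarith)] at hcross
    nlinarith
  rw [Real.logb, Real.logb, hb1, hb2]
  have h1 : L₁ / (L₁ + N₁) = (-L₁) / (-(L₁ + N₁)) := by rw [neg_div_neg_eq]
  have h2 : L₂ / (L₂ + N₂) = (-L₂) / (-(L₂ + N₂)) := by rw [neg_div_neg_eq]
  rw [h1, h2]
  have : (-L₁) / (-(L₁ + N₁)) ≤ (-L₂) / (-(L₂ + N₂)) := by
    rw [div_le_div_iff₀ (by linarith) (by linarith)]
    nlinarith
  linarith
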